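/- Let (𝕍, ω) be a symplectic vector space with Lagrangian decomposition 𝕍 = L₁ ⊕ L₂ and let A ⊆ 𝕍 be Lagrangian. Then pr₁(A) = (A ∩ L₂)^⊥ ∩ L₁ and pr₂(A) = (A ∩ L₁)^⊥ ∩ L₂, where ⊥ denotes the ω-orthogonal complement. -/

import Mathlib

open Module Submodule

lemma stmt_2_aux {k V : Type*} [Field k] [AddCommGroup V] [Module k V] [FiniteDimensional k V]
    (ω : LinearMap.BilinForm k V) (halt : ω.IsAlt) (hnd : ω.Nondegenerate)
    (L₁ L₂ A : Submodule k V)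
    (hL₁ : ω.orthogonal L₁ = L₁) (hL₂ : ω.orthogonal L₂ = L₂) (hA : ω.orthogonal A = A)
    (h : IsCompl L₁ L₂) :
    Submodule.map (L₁.subtype ∘ₗ Submodule.linearProjOfIsCompl L₁ L₂ h) A
        = ω.orthogonal (A ⊓ L₂) ⊓ L₁ := by
  have hrefl : ω.IsRefl := halt.isRefl
  set f : V →ₗ[k] V := L₁.subtype ∘ₗ Submodule.linearProjOfIsCompl L₁ L₂ h with hf
  -- inclusion
  have hle : Submodule.map f A ≤ ω.orthogonal (A ⊓ L₂) ⊓ L₁ := by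
    rintro _ ⟨a, ha, rfl⟩
    refine ⟨fun x hx => ?_, (Submodule.linearProjOfIsCompl L₁ L₂ h a).2⟩
    obtain ⟨hxA, hxL₂⟩ := hx
    set a₂ : V := (Submodule.linearProjOfIsCompl L₂ L₁ h.symm a : V) with ha₂
    have hsplit : (f a : V) = a - a₂ := by
      simp only [hf, LinearMap.comp_apply, Submodule.coe_subtype, ha₂]
      exact eq_sub_of_add_eq (Submodule.projection_add_projection_eq_self h a)
    have h1 : ω x a = 0 := by
      have hmem : a ∈ ω.orthogonal A := by rw [hA]; exact ha
      exact hmem x hxA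
    have h2 : ω x a₂ = 0 := by
      have hx' : x ∈ ω.orthogonal L₂ := by rw [hL₂]; exact hxL₂
      exact hrefl a₂ x (hx' a₂ (Submodule.linearProjOfIsCompl L₂ L₁ h.symm a).2)
    show ω x (f a) = 0
    rw [hsplit, map_sub, h1, h2, sub_zero]
  -- dimension count
  have hkerf : LinearMap.ker f = L₂ := by
    rw [hf, LinearMap.ker_comp_of_ker_eq_bot _ (Submodule.ker_subtype L₁)]
    exact Submodule.ker_projectionOnto h
  have hmap : Submodule.map f A = LinearMap.range (f ∘ₗ A.subtype) := by
    rw [LinearMap.range_comp, Submodule.range_subtype]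
  have hker : LinearMap.ker (f ∘ₗ A.subtype) = Submodule.comap A.subtype (A ⊓ L₂) := by
    rw [LinearMap.ker_comp, hkerf, Submodule.comap_inf, Submodule.comap_subtype_self, top_inf_eq]
  have hdimker : finrank k (LinearMap.ker (f ∘ₗ A.subtype)) = finrank k (A ⊓ L₂ : Submodule k V) := by
    rw [hker]
    exact (Submodule.comapSubtypeEquivOfLe (inf_le_left : A ⊓ L₂ ≤ A)).finrank_eq
  have hrn := LinearMap.finrank_range_add_finrank_ker (f ∘ₗ A.subtype)
  rw [hdimker] at hrn
  -- dims of Lagrangians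
  have hdimA : finrank k A + finrank k A = finrank k V := by
    have := LinearMap.BilinForm.finrank_add_finrank_orthogonal hrefl (B := ω) A
    rw [hA, LinearMap.BilinForm.orthogonal_top_eq_bot hnd, inf_bot_eq, finrank_bot, add_zero] at this
    exact this
  have hdimL₁ : finrank k L₁ + finrank k L₁ = finrank k V := by
    have := LinearMap.BilinForm.finrank_add_finrank_orthogonal hrefl (B := ω) L₁
    rw [hL₁, LinearMap.BilinForm.orthogonal_top_eq_bot hnd, inf_bot_eq, finrank_bot, add_zero] at this
    exact this
  have hdimorth : finrank k (ω.orthogonal (A ⊓ L₂)) = finrank k V - finrank k (A ⊓ L₂ : Submodule k V) :=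
    LinearMap.BilinForm.finrank_orthogonal hnd _
  have hsup : ω.orthogonal (A ⊓ L₂) ⊔ L₁ = ⊤ := by
    rw [eq_top_iff, ← h.symm.sup_eq_top]
    have hle2 : L₂ ≤ ω.orthogonal (A ⊓ L₂) := by
      exact le_of_eq hL₂.symm |>.trans (ω.orthogonal_le inf_le_right)
    exact sup_le_sup_right hle2 L₁
  have hinf := Submodule.finrank_sup_add_finrank_inf_eq (ω.orthogonal (A ⊓ L₂)) L₁
  rw [hsup, finrank_top] at hinf
  have hAle : finrank k (A ⊓ L₂ : Submodule k V) ≤ finrank k A :=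
    Submodule.finrank_mono inf_le_left
  have hALV : finrank k (A ⊓ L₂ : Submodule k V) ≤ finrank k V :=
    le_trans hAle (Submodule.finrank_le A)
  refine Submodule.eq_of_le_of_finrank_le hle ?_
  rw [hmap]
  omega

theorem stmt_2 {k V : Type*} [Field k] [AddCommGroup V] [Module k V] [FiniteDimensional k V]
    (ω : LinearMap.BilinForm k V) (halt : ω.IsAlt) (hnd : ω.Nondegenerate)
    (L₁ L₂ A : Submodule k V)
    (hL₁ : ω.orthogonal L₁ = L₁) (hL₂ : ω.orthogonal L₂ = L₂) (hA : ω.orthogonal A = A)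
    (h : IsCompl L₁ L₂) :
    Submodule.map (L₁.subtype ∘ₗ Submodule.linearProjOfIsCompl L₁ L₂ h) A
        = ω.orthogonal (A ⊓ L₂) ⊓ L₁ ∧
    Submodule.map (L₂.subtype ∘ₗ Submodule.linearProjOfIsCompl L₂ L₁ h.symm) A
        = ω.orthogonal (A ⊓ L₁) ⊓ L₂ := by
  exact ⟨stmt_2_aux ω halt hnd L₁ L₂ A hL₁ hL₂ hA h,
         stmt_2_aux ω halt hnd L₂ L₁ A hL₂ hL₁ hA h.symm⟩
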